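/- Let M and P be n×n real matrices with P symmetric and Mᵀ·P·M − P = −I. Let g : ℝⁿ → ℝⁿ and c ≥ 0 satisfy ‖g(x)‖ ≤ c‖x‖ for all x, where 2c·‖MᵀP‖ + c²·‖P‖ ≤ 2/3 (operator norms). Then for every x ∈ ℝⁿ, setting x⁺ = M·x + g(x), one has (x⁺)ᵀ·P·x⁺ − xᵀ·P·x ≤ −‖x‖²/3. -/

import Mathlib

open scoped Matrix

lemma toEucl_mul_apply {n : ℕ} (A B : Matrix (Fin n) (Fin n) ℝ) (x : EuclideanSpace ℝ (Fin n)) :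
    Matrix.toEuclideanLin (A * B) x = Matrix.toEuclideanLin A (Matrix.toEuclideanLin B x) := by
  simp [Matrix.toEuclideanLin_apply, Matrix.mulVec_mulVec]

lemma inner_toEucl_transpose {n : ℕ} (A : Matrix (Fin n) (Fin n) ℝ)
    (u v : EuclideanSpace ℝ (Fin n)) :
    (inner ℝ u (Matrix.toEuclideanLin A v) : ℝ) = inner ℝ (Matrix.toEuclideanLin Aᵀ u) v := by
  have : Aᵀ = Aᴴ := by ext i j; simp [Matrix.conjTranspose_apply]
  rw [this, Matrix.toEuclideanLin_conjTranspose_eq_adjoint, LinearMap.adjoint_inner_left]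

theorem lyapunov_decrease {n : ℕ} (M P : Matrix (Fin n) (Fin n) ℝ)
    (hPsymm : Pᵀ = P) (hLyap : Mᵀ * P * M - P = -1)
    (g : EuclideanSpace ℝ (Fin n) → EuclideanSpace ℝ (Fin n)) (c : ℝ) (hc : 0 ≤ c)
    (hg : ∀ x, ‖g x‖ ≤ c * ‖x‖)
    (hsmall : 2 * c * ‖LinearMap.toContinuousLinearMap (Matrix.toEuclideanLin (Mᵀ * P))‖
        + c ^ 2 * ‖LinearMap.toContinuousLinearMap (Matrix.toEuclideanLin P)‖ ≤ 2 / 3) :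
    ∀ x : EuclideanSpace ℝ (Fin n),
      (inner ℝ (Matrix.toEuclideanLin M x + g x)
          (Matrix.toEuclideanLin P (Matrix.toEuclideanLin M x + g x)) : ℝ)
        - (inner ℝ x (Matrix.toEuclideanLin P x) : ℝ) ≤ -‖x‖ ^ 2 / 3 := by
  intro x
  set a := Matrix.toEuclideanLin M x with ha
  set b := g x with hb
  set N1 := ‖LinearMap.toContinuousLinearMap (Matrix.toEuclideanLin (Mᵀ * P))‖ with hN1
  set N2 := ‖LinearMap.toContinuousLinearMap (Matrix.toEuclideanLin P)‖ with hN2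
  have hN1nn : 0 ≤ N1 := norm_nonneg _
  have hN2nn : 0 ≤ N2 := norm_nonneg _
  -- quadratic term
  have haa : (inner ℝ a (Matrix.toEuclideanLin P a) : ℝ)
      = (inner ℝ x (Matrix.toEuclideanLin P x) : ℝ) - ‖x‖ ^ 2 := by
    have h1 : (inner ℝ a (Matrix.toEuclideanLin P a) : ℝ)
        = inner ℝ x (Matrix.toEuclideanLin (Mᵀ * P * M) x) := by
      rw [toEucl_mul_apply, toEucl_mul_apply, inner_toEucl_transpose Mᵀ,
        Matrix.transpose_transpose, ← ha]
    have h2 : Mᵀ * P * M = P + (-1 : Matrix (Fin n) (Fin n) ℝ) := by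
      have := hLyap; linear_combination (norm := abel_nf) this
    rw [h1, h2, map_add, LinearMap.add_apply, inner_add_right]
    have hneg : Matrix.toEuclideanLin (-1 : Matrix (Fin n) (Fin n) ℝ) x = -x := by
      simp [Matrix.toEuclideanLin_apply]
    rw [hneg, inner_neg_right, real_inner_self_eq_norm_sq]
    ring
  -- cross term
  have hcross : (inner ℝ a (Matrix.toEuclideanLin P b) : ℝ)
      = inner ℝ (Matrix.toEuclideanLin (Mᵀ * P) b) x := by
    rw [real_inner_comm, ha, inner_toEucl_transpose M, ← toEucl_mul_apply]
  have hcross2 : (inner ℝ b (Matrix.toEuclideanLin P a) : ℝ)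
      = inner ℝ (Matrix.toEuclideanLin (Mᵀ * P) b) x := by
    rw [← hcross, inner_toEucl_transpose P b a, hPsymm]
    exact real_inner_comm _ _
  -- bounds
  have hbnorm : ‖b‖ ≤ c * ‖x‖ := hg x
  have hbnn : 0 ≤ ‖b‖ := norm_nonneg b
  have hxnn : 0 ≤ ‖x‖ := norm_nonneg x
  have hcb : (inner ℝ (Matrix.toEuclideanLin (Mᵀ * P) b) x : ℝ) ≤ N1 * ‖b‖ * ‖x‖ := by
    calc (inner ℝ (Matrix.toEuclideanLin (Mᵀ * P) b) x : ℝ)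
        ≤ ‖Matrix.toEuclideanLin (Mᵀ * P) b‖ * ‖x‖ := real_inner_le_norm _ _
      _ ≤ N1 * ‖b‖ * ‖x‖ := by
          gcongr
          exact (LinearMap.toContinuousLinearMap (Matrix.toEuclideanLin (Mᵀ * P))).le_opNorm b
  have hqb : (inner ℝ b (Matrix.toEuclideanLin P b) : ℝ) ≤ N2 * ‖b‖ * ‖b‖ := by
    calc (inner ℝ b (Matrix.toEuclideanLin P b) : ℝ)
        ≤ ‖b‖ * ‖Matrix.toEuclideanLin P b‖ := real_inner_le_norm _ _
      _ ≤ ‖b‖ * (N2 * ‖b‖) := by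
          gcongr
          exact (LinearMap.toContinuousLinearMap (Matrix.toEuclideanLin P)).le_opNorm b
      _ = N2 * ‖b‖ * ‖b‖ := by ring
  have expand : (inner ℝ (a + b) (Matrix.toEuclideanLin P (a + b)) : ℝ)
      = inner ℝ a (Matrix.toEuclideanLin P a) + inner ℝ a (Matrix.toEuclideanLin P b)
        + inner ℝ b (Matrix.toEuclideanLin P a) + inner ℝ b (Matrix.toEuclideanLin P b) := by
    rw [map_add, inner_add_left, inner_add_right, inner_add_right]
    ring
  rw [expand, haa, hcross, hcross2]
  nlinarith [sq_nonneg ‖x‖, mul_le_mul_of_nonneg_left hbnorm hN1nn,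
    mul_le_mul_of_nonneg_right (mul_le_mul hbnorm hbnorm hbnn (by positivity)) hN2nn,
    mul_le_mul_of_nonneg_right hsmall (sq_nonneg ‖x‖),
    mul_le_mul_of_nonneg_right hcb hxnn]
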